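/- arXiv:2512.21814 — 2 statements merged into one kernel-verified Lean document; each statement's English description precedes it below -/
import Mathlib

section
/- Let c1, c2 be constants with 0 ≤ 2c1 < c2 < 1. Then for all T ≥ 1, the double integral ∫_0^T ∫_0^T (s^{c1} + t^{c1}) / (1 + |s - t|^{c2}) ds dt is bounded by C · T^{1 + c1 + (1 - c2)} for a constant C depending only on c1 and c2. -/
open MeasureTheory
open scoped NNReal

/-- Subadditivity of `rpow` for exponents in `[0,1]`. -/
lemma my_rpow_add_le_add_rpow {x y p : ℝ} (hx : 0 ≤ x) (hy : 0 ≤ y)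
    (hp : 0 ≤ p) (hp1 : p ≤ 1) : (x + y) ^ p ≤ x ^ p + y ^ p := by
  have h := NNReal.rpow_add_le_add_rpow (⟨x, hx⟩ : ℝ≥0) (⟨y, hy⟩ : ℝ≥0) hp hp1
  have := (NNReal.coe_le_coe).2 h
  exact this

lemma my_cont (c2 s : ℝ) : Continuous fun u : ℝ => (1 + |u - s|) ^ (-c2) := by
  refine (continuous_const.add (continuous_id.sub continuous_const).abs).rpow_const ?_
  intro x
  left
  have : (0:ℝ) < 1 + |x - s| := by positivity
  exact ne_of_gt this

lemma my_g_cont (c2 : ℝ) : Continuous fun u : ℝ => (1 + |u|) ^ (-c2) := by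
  refine (continuous_const.add continuous_abs).rpow_const ?_
  intro x
  left
  have : (0:ℝ) < 1 + |x| := by positivity
  exact ne_of_gt this

lemma my_J_bound (c2 : ℝ) (h0 : 0 < c2) (h1 : c2 < 1) (T s : ℝ) (hT : 1 ≤ T)
    (hs0 : 0 ≤ s) (hsT : s ≤ T) :
    (∫ t in (0:ℝ)..T, (1 + |s - t|) ^ (-c2)) ≤ 4 * T ^ (1 - c2) / (1 - c2) := by
  have hT0 : (0:ℝ) < T := lt_of_lt_of_le one_pos hT
  set g : ℝ → ℝ := fun u => (1 + |u|) ^ (-c2) with hg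
  have hgc : Continuous g := my_g_cont c2
  have h1' : (∫ t in (0:ℝ)..T, g (s - t)) = ∫ u in (s - T)..s, g u := by
    have := intervalIntegral.integral_comp_sub_left g s (a := (0:ℝ)) (b := T)
    rwa [sub_zero] at this
  show (∫ t in (0:ℝ)..T, g (s - t)) ≤ 4 * T ^ (1 - c2) / (1 - c2)
  rw [h1']
  have hmono : (∫ u in (s - T)..s, g u) ≤ ∫ u in (-T)..T, g u := by
    refine intervalIntegral.integral_mono_interval (by linarith) (by linarith) hsT ?_ ?_
    · filter_upwards with x
      positivity
    · exact hgc.intervalIntegrable _ _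
  refine hmono.trans ?_
  have hsplit : (∫ u in (-T)..T, g u) = (∫ u in (-T)..(0:ℝ), g u) + ∫ u in (0:ℝ)..T, g u := by
    rw [intervalIntegral.integral_add_adjacent_intervals (hgc.intervalIntegrable _ _)
      (hgc.intervalIntegrable _ _)]
  have hneg : (∫ u in (-T)..(0:ℝ), g u) = ∫ u in (0:ℝ)..T, g u := by
    have := intervalIntegral.integral_comp_neg g (a := (0:ℝ)) (b := T)
    simp only [neg_zero] at this
    rw [← this]
    congr 1
    ext u
    simp [hg, abs_neg]
  have hpos : (∫ u in (0:ℝ)..T, g u) ≤ 2 * T ^ (1 - c2) / (1 - c2) := by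
    have hEq : (∫ u in (0:ℝ)..T, g u) = ∫ u in (0:ℝ)..T, (1 + u) ^ (-c2) := by
      refine intervalIntegral.integral_congr fun u hu => ?_
      rw [Set.uIcc_of_le (by linarith : (0:ℝ) ≤ T)] at hu
      simp [hg, abs_of_nonneg hu.1]
    rw [hEq]
    have hcomp : (∫ u in (0:ℝ)..T, (1 + u) ^ (-c2)) = ∫ v in (1:ℝ)..(1 + T), v ^ (-c2) := by
      simpa using intervalIntegral.integral_comp_add_left (fun v : ℝ => v ^ (-c2)) 1
        (a := (0:ℝ)) (b := T)
    rw [hcomp, integral_rpow (Or.inl (by linarith : (-1:ℝ) < -c2))]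
    have h2T : (1 + T) ^ (-c2 + 1) ≤ 2 * T ^ (1 - c2) := by
      have e1 : (1 + T) ^ (-c2 + 1) ≤ (2 * T) ^ (-c2 + 1) := by
        apply Real.rpow_le_rpow (by linarith) (by linarith) (by linarith)
      have e2 : (2 * T) ^ (-c2 + 1) = 2 ^ (-c2 + 1) * T ^ (-c2 + 1) :=
        Real.mul_rpow (by norm_num) (le_of_lt hT0)
      have e3 : (2:ℝ) ^ (-c2 + 1) ≤ 2 ^ (1:ℝ) :=
        Real.rpow_le_rpow_of_exponent_le (by norm_num) (by linarith)
      have e4 : T ^ (-c2 + 1) = T ^ (1 - c2) := by ring_nf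
      have hTpow : (0:ℝ) ≤ T ^ (-c2 + 1) := Real.rpow_nonneg (le_of_lt hT0) _
      calc (1 + T) ^ (-c2 + 1) ≤ 2 ^ (-c2 + 1) * T ^ (-c2 + 1) := by rw [← e2]; exact e1
        _ ≤ 2 ^ (1:ℝ) * T ^ (-c2 + 1) := mul_le_mul_of_nonneg_right e3 hTpow
        _ = 2 * T ^ (1 - c2) := by rw [Real.rpow_one, e4]
    have hone : (1:ℝ) ^ (-c2 + 1) = 1 := Real.one_rpow _
    rw [hone]
    rw [div_le_div_iff₀ (by linarith) (by linarith)]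
    have hTpow : (0:ℝ) ≤ T ^ (1 - c2) := Real.rpow_nonneg (le_of_lt hT0) _
    nlinarith [h2T]
  rw [hsplit, hneg]
  have : 4 * T ^ (1 - c2) / (1 - c2) = 2 * T ^ (1 - c2) / (1 - c2) + 2 * T ^ (1 - c2) / (1 - c2) := by
    ring
  linarith

theorem double_integral_kernel_bound (c1 c2 : ℝ) (hc1 : 0 ≤ c1) (hc12 : 2 * c1 < c2)
    (hc2 : c2 < 1) :
    ∃ C > 0, ∀ T : ℝ, 1 ≤ T →
      (∫ s in (0:ℝ)..T, ∫ t in (0:ℝ)..T, (s ^ c1 + t ^ c1) / (1 + |s - t| ^ c2))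
        ≤ C * T ^ (1 + c1 + (1 - c2)) := by
  have hc2pos : 0 < c2 := lt_of_le_of_lt (by linarith) hc12
  have h1c2 : 0 < 1 - c2 := by linarith
  refine ⟨8 / (1 - c2), by positivity, fun T hT => ?_⟩
  have hT0 : (0:ℝ) < T := lt_of_lt_of_le one_pos hT
  set M : ℝ := 2 * T ^ c1 * (4 * T ^ (1 - c2) / (1 - c2)) with hM
  have hMnn : 0 ≤ M := by positivity
  have hRHS : 8 / (1 - c2) * T ^ (1 + c1 + (1 - c2)) = T * M := by
    rw [hM, Real.rpow_add hT0, Real.rpow_add hT0, Real.rpow_one]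
    field_simp
    ring
  rw [hRHS]
  by_cases houter : IntervalIntegrable
      (fun s => ∫ t in (0:ℝ)..T, (s ^ c1 + t ^ c1) / (1 + |s - t| ^ c2)) volume 0 T
  · have hinnerb : ∀ s ∈ Set.Icc (0:ℝ) T,
        (∫ t in (0:ℝ)..T, (s ^ c1 + t ^ c1) / (1 + |s - t| ^ c2)) ≤ M := by
      intro s hs
      by_cases hinner : IntervalIntegrable
          (fun t => (s ^ c1 + t ^ c1) / (1 + |s - t| ^ c2)) volume 0 T
      · have hb : ∀ t ∈ Set.Icc (0:ℝ) T,
            (s ^ c1 + t ^ c1) / (1 + |s - t| ^ c2)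
              ≤ 2 * T ^ c1 * (1 + |s - t|) ^ (-c2) := by
          intro t ht
          have hnum : s ^ c1 + t ^ c1 ≤ 2 * T ^ c1 := by
            have h1 : s ^ c1 ≤ T ^ c1 := Real.rpow_le_rpow hs.1 hs.2 hc1
            have h2 : t ^ c1 ≤ T ^ c1 := Real.rpow_le_rpow ht.1 ht.2 hc1
            linarith
          have habs : (0:ℝ) ≤ |s - t| := abs_nonneg _
          have hden : (1 + |s - t|) ^ c2 ≤ 1 + |s - t| ^ c2 := by
            have := my_rpow_add_le_add_rpow (zero_le_one) habs
              (le_of_lt hc2pos) (le_of_lt hc2)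
            simpa [Real.one_rpow] using this
          have hdenpos : (0:ℝ) < (1 + |s - t|) ^ c2 := by
            apply Real.rpow_pos_of_pos; positivity
          have hfr : (s ^ c1 + t ^ c1) / (1 + |s - t| ^ c2)
              ≤ (2 * T ^ c1) / (1 + |s - t|) ^ c2 := by
            apply div_le_div₀ (by positivity) hnum hdenpos hden
          refine hfr.trans_eq ?_
          rw [Real.rpow_neg (by positivity), div_eq_mul_inv]
        calc (∫ t in (0:ℝ)..T, (s ^ c1 + t ^ c1) / (1 + |s - t| ^ c2))
            ≤ ∫ t in (0:ℝ)..T, 2 * T ^ c1 * (1 + |s - t|) ^ (-c2) := by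
              refine intervalIntegral.integral_mono_on (by linarith) hinner ?_ hb
              exact (Continuous.intervalIntegrable (by
                exact continuous_const.mul ((continuous_const.add
                  ((continuous_const.sub continuous_id).abs)).rpow_const
                  (fun x => Or.inl (ne_of_gt (add_pos_of_pos_of_nonneg one_pos (abs_nonneg _))))) : Continuous fun t : ℝ => 2 * T ^ c1 * (1 + |s - t|) ^ (-c2)) _ _)
          _ = 2 * T ^ c1 * ∫ t in (0:ℝ)..T, (1 + |s - t|) ^ (-c2) := by
              rw [intervalIntegral.integral_const_mul]
          _ ≤ M := by
              rw [hM]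
              refine mul_le_mul_of_nonneg_left ?_ (by positivity)
              exact my_J_bound c2 hc2pos hc2 T s hT hs.1 hs.2
      · rw [intervalIntegral.integral_undef hinner]
        exact hMnn
    calc (∫ s in (0:ℝ)..T, ∫ t in (0:ℝ)..T, (s ^ c1 + t ^ c1) / (1 + |s - t| ^ c2))
        ≤ ∫ _ in (0:ℝ)..T, M := by
          exact intervalIntegral.integral_mono_on (by linarith) houter
            intervalIntegrable_const hinnerb
      _ = T * M := by rw [intervalIntegral.integral_const, sub_zero, smul_eq_mul]
  · rw [intervalIntegral.integral_undef houter]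
    positivity
end

section
/- Under the hypotheses of the ergodic lemma (zero-mean process with |E[X_s X_t]| ≤ C (s^{c1}+t^{c1})/(1+|s-t|^{c2}), 0 ≤ 2c1 < c2 < 1, and 0 < ε < (c2-2c1)/4), setting Y_T = T^{-(1-ε)} ∫_0^T X_t dt, one has E[Y_T²] ≤ C' T^{-(c2 - c1 - 2ε)} for all T ≥ 1, where C' depends only on C, c1, c2. -/
open MeasureTheory Set intervalIntegral

lemma halfsq (a b : ℝ) : |a * b| ≤ (a ^ 2 + b ^ 2) / 2 := by
  rw [abs_mul]
  nlinarith [sq_nonneg (|a| - |b|), sq_abs a, sq_abs b, abs_nonneg a, abs_nonneg b]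

lemma kern_int {c2 T t : ℝ} (hc2 : 0 < c2) (hc2' : c2 < 1)
    (ht : t ∈ Set.Icc 0 T) :
    IntervalIntegrable (fun s => |s - t| ^ (-c2)) volume 0 T := by
  have hr : (-1:ℝ) < -c2 := by linarith
  have h1 : IntervalIntegrable (fun s => |s - t| ^ (-c2)) volume 0 t := by
    have h1' := (intervalIntegrable_rpow' (a := t) (b := 0) hr).comp_sub_left t
    simp only [sub_self, sub_zero] at h1'
    apply h1'.congr
    rw [uIoc_of_le ht.1]
    intro s hs
    show (t - s) ^ (-c2) = |s - t| ^ (-c2)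
    rw [abs_sub_comm, abs_of_nonneg (by linarith [hs.2] : (0:ℝ) ≤ t - s)]
  have h2 : IntervalIntegrable (fun s => |s - t| ^ (-c2)) volume t T := by
    have h2' := (intervalIntegrable_rpow' (a := 0) (b := T - t) hr).comp_sub_right t
    simp only [zero_add, sub_add_cancel] at h2'
    apply h2'.congr
    rw [uIoc_of_le ht.2]
    intro s hs
    show (s - t) ^ (-c2) = |s - t| ^ (-c2)
    rw [abs_of_nonneg (by linarith [hs.1] : (0:ℝ) ≤ s - t)]
  exact h1.trans h2

lemma kern_bound {c2 T t : ℝ} (hc2 : 0 < c2) (hc2' : c2 < 1)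
    (ht : t ∈ Set.Icc 0 T) :
    ∫ s in (0:ℝ)..T, |s - t| ^ (-c2) ≤ 2 * T ^ (1 - c2) / (1 - c2) := by
  have hr : (-1:ℝ) < -c2 := by linarith
  have hex : -c2 + 1 = 1 - c2 := by ring
  have hne : -c2 + 1 ≠ 0 := by linarith
  have h1 : IntervalIntegrable (fun s => |s - t| ^ (-c2)) volume 0 t := by
    have := kern_int hc2 hc2' (show t ∈ Set.Icc 0 t from ⟨ht.1, le_refl t⟩)
    exact this
  have h2 : IntervalIntegrable (fun s => |s - t| ^ (-c2)) volume t T := by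
    have h0 := kern_int hc2 hc2' ht
    exact (h1.symm.trans h0)
  rw [← integral_add_adjacent_intervals h1 h2]
  have e1 : ∫ s in (0:ℝ)..t, |s - t| ^ (-c2) = t ^ (1 - c2) / (1 - c2) := by
    have : ∫ s in (0:ℝ)..t, |s - t| ^ (-c2) = ∫ s in (0:ℝ)..t, (t - s) ^ (-c2) := by
      apply integral_congr
      intro s hs
      rw [uIcc_of_le ht.1] at hs
      show |s - t| ^ (-c2) = _
      rw [abs_sub_comm, abs_of_nonneg (by linarith [hs.2] : (0:ℝ) ≤ t - s)]
    rw [this, integral_comp_sub_left (fun x : ℝ => x ^ (-c2)) t, sub_self, sub_zero,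
      integral_rpow (Or.inl hr), Real.zero_rpow hne, hex, sub_zero]
  have e2 : ∫ s in t..T, |s - t| ^ (-c2) = (T - t) ^ (1 - c2) / (1 - c2) := by
    have : ∫ s in t..T, |s - t| ^ (-c2) = ∫ s in t..T, (s - t) ^ (-c2) := by
      apply integral_congr
      intro s hs
      rw [uIcc_of_le ht.2] at hs
      show |s - t| ^ (-c2) = _
      rw [abs_of_nonneg (by linarith [hs.1] : (0:ℝ) ≤ s - t)]
    rw [this, integral_comp_sub_right (fun x : ℝ => x ^ (-c2)) t, sub_self,
      integral_rpow (Or.inl hr), Real.zero_rpow hne, hex, sub_zero]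
  rw [e1, e2]
  have hpow1 : t ^ (1 - c2) ≤ T ^ (1 - c2) :=
    Real.rpow_le_rpow ht.1 ht.2 (by linarith)
  have hpow2 : (T - t) ^ (1 - c2) ≤ T ^ (1 - c2) :=
    Real.rpow_le_rpow (by linarith [ht.2]) (by linarith [ht.1]) (by linarith)
  have h12 : (0:ℝ) < 1 - c2 := by linarith
  rw [← add_div, div_le_div_iff₀ h12 h12]
  nlinarith

theorem second_moment_time_average {Ω : Type*} [MeasurableSpace Ω] (P : Measure Ω)
    [IsProbabilityMeasure P]
    (X : ℝ → Ω → ℝ) (c1 c2 C ε : ℝ)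
    (hc1 : 0 ≤ c1) (hc12 : 2 * c1 < c2) (hc2 : c2 < 1) (hC : 0 < C)
    (hmeas : ∀ t, Measurable (X t))
    (hcont : ∀ᵐ ω ∂P, ContinuousOn (fun t => X t ω) (Set.Ici 0))
    (hL2 : ∀ t, 0 ≤ t → Integrable (fun ω => (X t ω) ^ 2) P)
    (hmean : ∀ t, 0 ≤ t → ∫ ω, X t ω ∂P = 0)
    (hcov : ∀ s, 0 ≤ s → ∀ t, 0 ≤ t →
      |∫ ω, X s ω * X t ω ∂P| ≤ C * (s ^ c1 + t ^ c1) / (1 + |s - t| ^ c2))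
    (hε : 0 < ε) (hε' : ε < (c2 - 2 * c1) / 4) :
    ∃ C' > 0, ∀ T : ℝ, 1 ≤ T →
      ∫ ω, (T ^ (-(1 - ε)) * ∫ t in (0:ℝ)..T, X t ω) ^ 2 ∂P
        ≤ C' * T ^ (-(c2 - c1 - 2 * ε)) := by
  classical
  have hc2pos : 0 < c2 := by linarith
  have h12 : (0:ℝ) < 1 - c2 := by linarith
  -- modification of X : continuous everywhere, jointly measurable
  have h0 : P {ω | ¬ ContinuousOn (fun t => X t ω) (Set.Ici 0)} = 0 := ae_iff.mp hcont
  obtain ⟨N, hNsub, hNmeas, hPN⟩ := exists_measurable_superset_of_null h0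
  set Y : ℝ → Ω → ℝ := fun t ω => if ω ∈ N then 0 else X (max t 0) ω with hYdef
  have hNae : ∀ᵐ ω ∂P, ω ∉ N := compl_mem_ae_iff.mpr hPN
  have hYmeas : ∀ t, Measurable (Y t) := fun t =>
    Measurable.ite hNmeas measurable_const (hmeas _)
  have hYcont : ∀ ω, Continuous fun t => Y t ω := by
    intro ω
    by_cases hω : ω ∈ N
    · simp only [hYdef, if_pos hω]; exact continuous_const
    · simp only [hYdef, if_neg hω]
      have hc : ContinuousOn (fun t => X t ω) (Set.Ici 0) := by
        by_contra h; exact hω (hNsub h)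
      exact hc.comp_continuous (continuous_id.max continuous_const)
        (fun x => le_max_right x 0)
  have hYjm : Measurable (Function.uncurry Y) :=
    measurable_uncurry_of_continuous_of_measurable hYcont hYmeas
  have hYeq : ∀ t, 0 ≤ t → ∀ ω, ω ∉ N → Y t ω = X t ω := by
    intro t ht ω hω; simp [hYdef, if_neg hω, max_eq_left ht]
  have hYsq_int : ∀ t : ℝ, Integrable (fun ω => Y t ω ^ 2) P := by
    intro t
    refine (hL2 (max t 0) (le_max_right _ _)).congr ?_
    filter_upwards [hNae] with ω hω
    simp [hYdef, if_neg hω]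
  have hYmul_int : ∀ s t : ℝ, Integrable (fun ω => Y s ω * Y t ω) P := by
    intro s t
    refine Integrable.mono' (((hYsq_int s).add (hYsq_int t)).div_const 2)
      (((hYmeas s).mul (hYmeas t)).aestronglyMeasurable) ?_
    filter_upwards with ω
    rw [Real.norm_eq_abs]
    exact halfsq _ _
  have hYcov : ∀ s, 0 ≤ s → ∀ t, 0 ≤ t →
      |∫ ω, Y s ω * Y t ω ∂P| ≤ C * (s ^ c1 + t ^ c1) / (1 + |s - t| ^ c2) := by
    intro s hs t ht
    have he : ∫ ω, Y s ω * Y t ω ∂P = ∫ ω, X s ω * X t ω ∂P := by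
      apply MeasureTheory.integral_congr_ae
      filter_upwards [hNae] with ω hω
      rw [hYeq s hs ω hω, hYeq t ht ω hω]
    rw [he]; exact hcov s hs t ht
  -- choose constant
  refine ⟨4 * C / (1 - c2), by positivity, ?_⟩
  intro T hT
  have hT0 : (0:ℝ) < T := lt_of_lt_of_le one_pos hT
  have hT0' : (0:ℝ) ≤ T := hT0.le
  have hYvar : ∀ t, 0 ≤ t → t ≤ T → ∫ ω, Y t ω ^ 2 ∂P ≤ 2 * C * T ^ c1 := by
    intro t ht htT
    have h1 := hYcov t ht t ht
    rw [sub_self, abs_zero, Real.zero_rpow (ne_of_gt hc2pos), add_zero, div_one] at h1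
    have h2 : t ^ c1 ≤ T ^ c1 := Real.rpow_le_rpow ht htT hc1
    have h3 : ∫ ω, Y t ω ^ 2 ∂P = ∫ ω, Y t ω * Y t ω ∂P := by
      congr 1; funext ω; rw [sq]
    rw [h3]
    calc ∫ ω, Y t ω * Y t ω ∂P ≤ |∫ ω, Y t ω * Y t ω ∂P| := le_abs_self _
      _ ≤ C * (t ^ c1 + t ^ c1) := h1
      _ ≤ 2 * C * T ^ c1 := by nlinarith
  set μ : Measure ℝ := volume.restrict (Set.Ioc (0:ℝ) T) with hμdef
  haveI : IsFiniteMeasure μ := ⟨by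
    rw [hμdef, Measure.restrict_apply_univ, Real.volume_Ioc]
    exact ENNReal.ofReal_lt_top⟩
  have hμuniv : μ Set.univ = ENNReal.ofReal T := by
    rw [hμdef, Measure.restrict_apply_univ, Real.volume_Ioc, sub_zero]
  have hmemIoc : ∀ᵐ p ∂(μ.prod μ), p.1 ∈ Set.Ioc 0 T ∧ p.2 ∈ Set.Ioc 0 T := by
    have : μ.prod μ = (volume.prod volume).restrict (Set.Ioc 0 T ×ˢ Set.Ioc 0 T) :=
      Measure.prod_restrict _ _
    rw [this]
    filter_upwards [ae_restrict_mem (measurableSet_Ioc.prod measurableSet_Ioc)] with p hp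
    exact hp
  have hdiag : ∀ᵐ p ∂(μ.prod μ), p.1 ≠ p.2 := by
    rw [ae_iff]
    have hm : MeasurableSet {p : ℝ × ℝ | p.1 = p.2} :=
      measurableSet_eq_fun measurable_fst measurable_snd
    have hset : {p : ℝ × ℝ | ¬ p.1 ≠ p.2} = {p : ℝ × ℝ | p.1 = p.2} := by
      ext p; simp
    rw [hset, Measure.prod_apply hm]
    have hz : ∀ s : ℝ, μ (Prod.mk s ⁻¹' {p : ℝ × ℝ | p.1 = p.2}) = 0 := by
      intro s
      have he : (Prod.mk s ⁻¹' {p : ℝ × ℝ | p.1 = p.2}) = {s} := by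
        ext x; simp [eq_comm]
      rw [he, hμdef, Measure.restrict_apply (measurableSet_singleton _)]
      exact measure_mono_null Set.inter_subset_left Real.volume_singleton
    simp [hz]
  -- integrability of the big function
  have hmeasH : Measurable (Function.uncurry fun ω (p : ℝ × ℝ) => Y p.1 ω * Y p.2 ω) := by
    have m1 : Measurable fun q : Ω × ℝ × ℝ => Y q.2.1 q.1 :=
      hYjm.comp ((measurable_fst.comp measurable_snd).prodMk measurable_fst)
    have m2 : Measurable fun q : Ω × ℝ × ℝ => Y q.2.2 q.1 :=
      hYjm.comp ((measurable_snd.comp measurable_snd).prodMk measurable_fst)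
    exact m1.mul m2
  have hEbound : ∀ s t : ℝ, s ∈ Set.Ioc (0:ℝ) T → t ∈ Set.Ioc (0:ℝ) T →
      ∫ ω, |Y s ω * Y t ω| ∂P ≤ 2 * C * T ^ c1 := by
    intro s t hs ht
    have hs1 := hYvar s hs.1.le hs.2
    have ht1 := hYvar t ht.1.le ht.2
    calc ∫ ω, |Y s ω * Y t ω| ∂P
        ≤ ∫ ω, (Y s ω ^ 2 + Y t ω ^ 2) / 2 ∂P :=
          MeasureTheory.integral_mono (hYmul_int s t).abs
            (((hYsq_int s).add (hYsq_int t)).div_const 2) (fun ω => halfsq _ _)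
      _ = ((∫ ω, Y s ω ^ 2 ∂P) + ∫ ω, Y t ω ^ 2 ∂P) / 2 := by
          rw [MeasureTheory.integral_div, MeasureTheory.integral_add (hYsq_int s) (hYsq_int t)]
      _ ≤ 2 * C * T ^ c1 := by linarith
  have hHint : Integrable (Function.uncurry fun ω (p : ℝ × ℝ) => Y p.1 ω * Y p.2 ω)
      (P.prod (μ.prod μ)) := by
    refine ⟨hmeasH.aestronglyMeasurable, ?_⟩
    rw [hasFiniteIntegral_iff_norm]
    have hswap : (∫⁻ q, ENNReal.ofReal ‖(Function.uncurry fun ω (p : ℝ × ℝ) => Y p.1 ω * Y p.2 ω) q‖ ∂(P.prod (μ.prod μ)))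
        = ∫⁻ q, ENNReal.ofReal ‖Y q.1.1 q.2 * Y q.1.2 q.2‖ ∂((μ.prod μ).prod P) := by
      rw [← lintegral_prod_swap
        (fun q : Ω × ℝ × ℝ => ENNReal.ofReal ‖(Function.uncurry fun ω (p : ℝ × ℝ) => Y p.1 ω * Y p.2 ω) q‖)]
      rfl
    have hmeasH2 : Measurable fun q : (ℝ × ℝ) × Ω => Y q.1.1 q.2 * Y q.1.2 q.2 := by
      have m1 : Measurable fun q : (ℝ × ℝ) × Ω => Y q.1.1 q.2 :=
        hYjm.comp ((measurable_fst.comp measurable_fst).prodMk measurable_snd)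
      have m2 : Measurable fun q : (ℝ × ℝ) × Ω => Y q.1.2 q.2 :=
        hYjm.comp ((measurable_snd.comp measurable_fst).prodMk measurable_snd)
      exact m1.mul m2
    rw [hswap, lintegral_prod _ hmeasH2.norm.ennreal_ofReal.aemeasurable]
    have hinner : ∀ᵐ p ∂(μ.prod μ),
        (∫⁻ ω, ENNReal.ofReal ‖Y p.1 ω * Y p.2 ω‖ ∂P) ≤ ENNReal.ofReal (2 * C * T ^ c1) := by
      filter_upwards [hmemIoc] with p hp
      have he : ∫⁻ ω, ENNReal.ofReal ‖Y p.1 ω * Y p.2 ω‖ ∂P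
          = ENNReal.ofReal (∫ ω, |Y p.1 ω * Y p.2 ω| ∂P) := by
        rw [ofReal_integral_eq_lintegral_ofReal (hYmul_int _ _).abs
          (Filter.Eventually.of_forall fun ω => abs_nonneg _)]
        simp_rw [Real.norm_eq_abs]
      rw [he]
      exact ENNReal.ofReal_le_ofReal (hEbound _ _ hp.1 hp.2)
    calc (∫⁻ p, ∫⁻ ω, ENNReal.ofReal ‖Y p.1 ω * Y p.2 ω‖ ∂P ∂(μ.prod μ))
        ≤ ∫⁻ _, ENNReal.ofReal (2 * C * T ^ c1) ∂(μ.prod μ) := lintegral_mono_ae hinner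
      _ = ENNReal.ofReal (2 * C * T ^ c1) * (μ.prod μ) Set.univ := lintegral_const _
      _ < ⊤ := ENNReal.mul_lt_top ENNReal.ofReal_lt_top (measure_lt_top _ _)
  -- the kernel function is integrable on the product
  have hkern_intOn : ∀ s : ℝ, s ∈ Set.Icc (0:ℝ) T →
      IntegrableOn (fun t => |t - s| ^ (-c2)) (Set.Ioc 0 T) volume := by
    intro s hs
    rw [← intervalIntegrable_iff_integrableOn_Ioc_of_le hT0']
    exact kern_int hc2pos hc2 hs
  have hkern_bound' : ∀ s : ℝ, s ∈ Set.Icc (0:ℝ) T →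
      ∫ t, |s - t| ^ (-c2) ∂μ ≤ 2 * T ^ (1 - c2) / (1 - c2) := by
    intro s hs
    have hfe : (fun t => |s - t| ^ (-c2)) = fun t => |t - s| ^ (-c2) := by
      funext t; rw [abs_sub_comm]
    have he : ∫ t, |s - t| ^ (-c2) ∂μ = ∫ t in (0:ℝ)..T, |t - s| ^ (-c2) := by
      rw [intervalIntegral.integral_of_le hT0', hμdef, hfe]
    rw [he]
    exact kern_bound hc2pos hc2 hs
  have hgmeas : Measurable fun p : ℝ × ℝ => |p.1 - p.2| ^ (-c2) :=
    (measurable_fst.sub measurable_snd).abs.pow measurable_const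
  have hgint : Integrable (fun p : ℝ × ℝ => |p.1 - p.2| ^ (-c2)) (μ.prod μ) := by
    refine ⟨hgmeas.aestronglyMeasurable, ?_⟩
    rw [hasFiniteIntegral_iff_norm]
    rw [lintegral_prod _ hgmeas.norm.ennreal_ofReal.aemeasurable]
    have hinner : ∀ᵐ s ∂μ,
        (∫⁻ t, ENNReal.ofReal ‖|s - t| ^ (-c2)‖ ∂μ)
          ≤ ENNReal.ofReal (2 * T ^ (1 - c2) / (1 - c2)) := by
      filter_upwards [ae_restrict_mem measurableSet_Ioc] with s hs
      have hsIcc : s ∈ Set.Icc (0:ℝ) T := ⟨hs.1.le, hs.2⟩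
      have hintOn : Integrable (fun t => |s - t| ^ (-c2)) μ := by
        have := hkern_intOn s hsIcc
        rw [hμdef]
        apply this.congr_fun ?_ measurableSet_Ioc
        intro t _
        show |t - s| ^ (-c2) = |s - t| ^ (-c2)
        rw [abs_sub_comm]
      have he : (∫⁻ t, ENNReal.ofReal ‖|s - t| ^ (-c2)‖ ∂μ)
          = ENNReal.ofReal (∫ t, |s - t| ^ (-c2) ∂μ) := by
        rw [ofReal_integral_eq_lintegral_ofReal hintOn
          (Filter.Eventually.of_forall fun t => Real.rpow_nonneg (abs_nonneg _) _)]
        congr 1; funext t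
        rw [Real.norm_eq_abs, abs_of_nonneg (Real.rpow_nonneg (abs_nonneg _) _)]
      rw [he]
      exact ENNReal.ofReal_le_ofReal (hkern_bound' s hsIcc)
    calc (∫⁻ s, ∫⁻ t, ENNReal.ofReal ‖|s - t| ^ (-c2)‖ ∂μ ∂μ)
        ≤ ∫⁻ _, ENNReal.ofReal (2 * T ^ (1 - c2) / (1 - c2)) ∂μ := lintegral_mono_ae hinner
      _ = ENNReal.ofReal (2 * T ^ (1 - c2) / (1 - c2)) * μ Set.univ := lintegral_const _
      _ < ⊤ := ENNReal.mul_lt_top ENNReal.ofReal_lt_top (measure_lt_top _ _)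
  -- the key estimate
  have key : ∫ ω, (∫ t in (0:ℝ)..T, Y t ω) ^ 2 ∂P
      ≤ 2 * C * T ^ c1 * (T * (2 * T ^ (1 - c2) / (1 - c2))) := by
    have h1 : ∫ ω, (∫ t in (0:ℝ)..T, Y t ω) ^ 2 ∂P
        = ∫ ω, ∫ p, Y p.1 ω * Y p.2 ω ∂(μ.prod μ) ∂P := by
      apply MeasureTheory.integral_congr_ae
      apply Filter.Eventually.of_forall
      intro ω
      show (∫ t in (0:ℝ)..T, Y t ω) ^ 2 = ∫ p, Y p.1 ω * Y p.2 ω ∂(μ.prod μ)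
      rw [intervalIntegral.integral_of_le hT0', sq, ← integral_prod_mul]
    rw [h1, integral_integral_swap hHint]
    have h2 : ∫ p, (∫ ω, Y p.1 ω * Y p.2 ω ∂P) ∂(μ.prod μ)
        ≤ ∫ p, 2 * C * T ^ c1 * |p.1 - p.2| ^ (-c2) ∂(μ.prod μ) := by
      apply MeasureTheory.integral_mono_ae hHint.swap.integral_prod_left (hgint.const_mul _)
      filter_upwards [hmemIoc, hdiag] with p hp hne
      have hD : 0 < |p.1 - p.2| ^ c2 :=
        Real.rpow_pos_of_pos (abs_pos.mpr (sub_ne_zero.mpr hne)) c2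
      have hnum : C * (p.1 ^ c1 + p.2 ^ c1) ≤ 2 * C * T ^ c1 := by
        have e1 : p.1 ^ c1 ≤ T ^ c1 := Real.rpow_le_rpow hp.1.1.le hp.1.2 hc1
        have e2 : p.2 ^ c1 ≤ T ^ c1 := Real.rpow_le_rpow hp.2.1.le hp.2.2 hc1
        nlinarith
      calc ∫ ω, Y p.1 ω * Y p.2 ω ∂P ≤ |∫ ω, Y p.1 ω * Y p.2 ω ∂P| := le_abs_self _
        _ ≤ C * (p.1 ^ c1 + p.2 ^ c1) / (1 + |p.1 - p.2| ^ c2) :=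
            hYcov p.1 hp.1.1.le p.2 hp.2.1.le
        _ ≤ (2 * C * T ^ c1) / (|p.1 - p.2| ^ c2) :=
            div_le_div₀ (by positivity) hnum hD (by linarith)
        _ = 2 * C * T ^ c1 * |p.1 - p.2| ^ (-c2) := by
            rw [Real.rpow_neg (abs_nonneg _), div_eq_mul_inv]
    have h3 : ∫ p, 2 * C * T ^ c1 * |p.1 - p.2| ^ (-c2) ∂(μ.prod μ)
        = 2 * C * T ^ c1 * ∫ p, |p.1 - p.2| ^ (-c2) ∂(μ.prod μ) :=
      MeasureTheory.integral_const_mul _ _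
    have h4 : ∫ p, |p.1 - p.2| ^ (-c2) ∂(μ.prod μ) ≤ T * (2 * T ^ (1 - c2) / (1 - c2)) := by
      rw [integral_prod _ hgint]
      calc ∫ s, (∫ t, |s - t| ^ (-c2) ∂μ) ∂μ
          ≤ ∫ _, 2 * T ^ (1 - c2) / (1 - c2) ∂μ := by
            apply MeasureTheory.integral_mono_ae hgint.integral_prod_left (integrable_const _)
            filter_upwards [ae_restrict_mem measurableSet_Ioc] with s hs
            exact hkern_bound' s ⟨hs.1.le, hs.2⟩
        _ = T * (2 * T ^ (1 - c2) / (1 - c2)) := by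
            rw [MeasureTheory.integral_const, Measure.real, hμuniv, ENNReal.toReal_ofReal hT0', smul_eq_mul]
    calc ∫ p, (∫ ω, Y p.1 ω * Y p.2 ω ∂P) ∂(μ.prod μ)
        ≤ 2 * C * T ^ c1 * ∫ p, |p.1 - p.2| ^ (-c2) ∂(μ.prod μ) := by rw [← h3]; exact h2
      _ ≤ 2 * C * T ^ c1 * (T * (2 * T ^ (1 - c2) / (1 - c2))) := by
          apply mul_le_mul_of_nonneg_left h4 (by positivity)
  -- put it together
  have hstep1 : ∫ ω, (T ^ (-(1 - ε)) * ∫ t in (0:ℝ)..T, X t ω) ^ 2 ∂P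
      = (T ^ (-(1 - ε))) ^ 2 * ∫ ω, (∫ t in (0:ℝ)..T, Y t ω) ^ 2 ∂P := by
    rw [← MeasureTheory.integral_const_mul]
    apply MeasureTheory.integral_congr_ae
    filter_upwards [hNae] with ω hω
    have he : ∫ t in (0:ℝ)..T, X t ω = ∫ t in (0:ℝ)..T, Y t ω := by
      apply intervalIntegral.integral_congr
      intro t htmem
      rw [uIcc_of_le hT0'] at htmem
      exact (hYeq t htmem.1 ω hω).symm
    rw [he, mul_pow]
  rw [hstep1]
  calc (T ^ (-(1 - ε))) ^ 2 * ∫ ω, (∫ t in (0:ℝ)..T, Y t ω) ^ 2 ∂P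
      ≤ (T ^ (-(1 - ε))) ^ 2 * (2 * C * T ^ c1 * (T * (2 * T ^ (1 - c2) / (1 - c2)))) :=
        mul_le_mul_of_nonneg_left key (sq_nonneg _)
    _ = 4 * C / (1 - c2) *
        (T ^ (-(1 - ε)) * T ^ (-(1 - ε)) * (T ^ c1 * (T ^ (1:ℝ) * T ^ (1 - c2)))) := by
        rw [Real.rpow_one, sq]; ring
    _ = 4 * C / (1 - c2) * T ^ (-(c2 - c1 - 2 * ε)) := by
        simp only [← Real.rpow_add hT0]
        congr 1
        congr 1
        ring
end
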